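/- Let a > 0, b > 0, ε > 0 with a + ε < b, let w ∈ R^2, and let δ > 0 satisfy e^{-(b-a-ε)/δ^2} ≤ δ. Then (b/π) ∫_{ {v ∈ R^2 : |v - (b/(b-a-ε)) w| > δ^{-1}} } e^{ε|v|^2} e^{a|v|^2} e^{-b|v-w|^2} dv ≤ δ · ( b/(b-a-ε) ) · exp( ((a+ε)b/(b-a-ε)) |w|^2 ). -/

import Mathlib

open MeasureTheory Real Set Filter

lemma tail_one_dim (c R : ℝ) (hc : 0 < c) :
    ∫ y in Set.Ioi R, y * Real.exp (-c * y ^ 2) = Real.exp (-c * R ^ 2) / (2 * c) := by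
  have hderiv : ∀ x ∈ Set.Ioi R, HasDerivAt (fun y => -Real.exp (-c * y ^ 2) / (2 * c))
      (x * Real.exp (-c * x ^ 2)) x := by
    intro x _
    have h1 : HasDerivAt (fun y : ℝ => -c * y ^ 2) (-c * (2 * x)) x := by
      simpa using ((hasDerivAt_pow 2 x).const_mul (-c))
    have h2 := (h1.exp).neg.div_const (2 * c)
    convert h2 using 1
    · rfl
    · rfl
    · rfl
    rw [eq_div_iff (by positivity)]
    ring
  have hint : IntegrableOn (fun y => y * Real.exp (-c * y ^ 2)) (Set.Ioi R) :=
    (integrable_mul_exp_neg_mul_sq hc).integrableOn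
  have hbot : Filter.Tendsto (fun y : ℝ => -c * y ^ 2) atTop atBot := by
    have h2 : Filter.Tendsto (fun y : ℝ => y ^ 2) atTop atTop :=
      tendsto_pow_atTop (by norm_num)
    exact h2.const_mul_atTop_of_neg (neg_neg_iff_pos.mpr hc)
  have htend : Filter.Tendsto (fun y => -Real.exp (-c * y ^ 2) / (2 * c)) atTop (nhds 0) := by
    have h0 : Filter.Tendsto (fun y : ℝ => Real.exp (-c * y ^ 2)) atTop (nhds 0) :=
      Real.tendsto_exp_atBot.comp hbot
    simpa using (h0.neg.div_const (2 * c))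
  have hcont : ContinuousWithinAt (fun y => -Real.exp (-c * y ^ 2) / (2 * c)) (Set.Ici R) R :=
    Continuous.continuousWithinAt (by continuity)
  rw [MeasureTheory.integral_Ioi_of_hasDerivAt_of_tendsto hcont hderiv hint htend]
  field_simp
  ring

lemma tail_two_dim (c R : ℝ) (hc : 0 < c) (hR : 0 < R) :
    ∫ v in {v : EuclideanSpace ℝ (Fin 2) | R < ‖v‖}, Real.exp (-c * ‖v‖ ^ 2)
      = Real.pi / c * Real.exp (-c * R ^ 2) := by
  set g : ℝ → ℝ := Set.indicator (Set.Ioi R) (fun y => Real.exp (-c * y ^ 2)) with hg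
  have hset : {v : EuclideanSpace ℝ (Fin 2) | R < ‖v‖}
      = (fun v : EuclideanSpace ℝ (Fin 2) => ‖v‖) ⁻¹' (Set.Ioi R) := rfl
  have hmeas : MeasurableSet {v : EuclideanSpace ℝ (Fin 2) | R < ‖v‖} := by
    rw [hset]; exact measurableSet_Ioi.preimage measurable_norm
  have h1 : ∫ v in {v : EuclideanSpace ℝ (Fin 2) | R < ‖v‖}, Real.exp (-c * ‖v‖ ^ 2)
      = ∫ v : EuclideanSpace ℝ (Fin 2), g ‖v‖ := by
    rw [← MeasureTheory.integral_indicator hmeas]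
    congr 1 with v
  rw [h1, MeasureTheory.integral_fun_norm_addHaar volume g]
  have hdim : Module.finrank ℝ (EuclideanSpace ℝ (Fin 2)) = 2 := by
    simp [finrank_euclideanSpace]
  have hvol : (volume (Metric.ball (0 : EuclideanSpace ℝ (Fin 2)) 1)).toReal = Real.pi := by
    rw [EuclideanSpace.volume_ball]
    simp [Real.sq_sqrt Real.pi_pos.le]
    norm_num [Real.Gamma_two, ENNReal.toReal_ofReal Real.pi_pos.le]
  rw [hdim, measureReal_def, hvol]
  have h2 : ∫ y in Set.Ioi (0 : ℝ), y ^ (2 - 1) • g y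
      = ∫ y in Set.Ioi R, y * Real.exp (-c * y ^ 2) := by
    simp only [show 2-1=1 from rfl, pow_one, smul_eq_mul, hg]
    have hpt : ∀ y : ℝ, y * (Set.Ioi R).indicator (fun y => Real.exp (-c * y ^ 2)) y
        = (Set.Ioi R).indicator (fun y => y * Real.exp (-c * y ^ 2)) y := fun y =>
      (Set.indicator_mul_right (Set.Ioi R) (fun y : ℝ => y) (fun y => Real.exp (-c * y ^ 2))).symm
    simp_rw [hpt]
    rw [MeasureTheory.setIntegral_indicator measurableSet_Ioi]
    congr 1
    rw [Set.Ioi_inter_Ioi, max_eq_right hR.le]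
  rw [h2, tail_one_dim c R hc]
  field_simp
  rw [nsmul_eq_mul, smul_eq_mul]
  field_simp
  norm_num

theorem gaussian_shift_tail_integral_small (a b ε δ : ℝ) (ha : 0 < a) (hb : 0 < b)
    (hε : 0 < ε) (hab : a + ε < b) (hδ : 0 < δ)
    (hδ' : Real.exp (-(b - a - ε) / δ ^ 2) ≤ δ) (w : EuclideanSpace ℝ (Fin 2)) :
    (b / Real.pi) * ∫ v in {v : EuclideanSpace ℝ (Fin 2) |
          δ⁻¹ < ‖v - (b / (b - a - ε)) • w‖},
        Real.exp (ε * ‖v‖ ^ 2) * Real.exp (a * ‖v‖ ^ 2) * Real.exp (-b * ‖v - w‖ ^ 2)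
      ≤ δ * (b / (b - a - ε)) * Real.exp ((a + ε) * b / (b - a - ε) * ‖w‖ ^ 2) := by
  have hc : 0 < b - a - ε := by linarith
  set c := b - a - ε with hcdef
  set m : EuclideanSpace ℝ (Fin 2) := (b / c) • w with hm
  set K := (a + ε) * b / c * ‖w‖ ^ 2 with hK
  have hcne : c ≠ 0 := hc.ne'
  -- pointwise identity (complete the square)
  have hptv : ∀ v : EuclideanSpace ℝ (Fin 2),
      Real.exp (ε * ‖v‖ ^ 2) * Real.exp (a * ‖v‖ ^ 2) * Real.exp (-b * ‖v - w‖ ^ 2)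
      = Real.exp K * Real.exp (-c * ‖v - m‖ ^ 2) := by
    intro v
    rw [← Real.exp_add, ← Real.exp_add, ← Real.exp_add]
    congr 1
    have e1 : ‖v - w‖ ^ 2 = ‖v‖ ^ 2 - 2 * (inner ℝ v w : ℝ) + ‖w‖ ^ 2 := norm_sub_sq_real v w
    have e2 : ‖v - m‖ ^ 2
        = ‖v‖ ^ 2 - 2 * ((b / c) * (inner ℝ v w : ℝ)) + (b / c) ^ 2 * ‖w‖ ^ 2 := by
      rw [hm, norm_sub_sq_real, real_inner_smul_right, norm_smul, mul_pow, Real.norm_eq_abs,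
        sq_abs]
    rw [e1, e2, hK, hcdef]
    have hc2 : b - a - ε ≠ 0 := hcne
    field_simp
    ring
  -- measurable sets
  have hS0 : MeasurableSet {u : EuclideanSpace ℝ (Fin 2) | δ⁻¹ < ‖u‖} :=
    measurableSet_Ioi.preimage measurable_norm
  have hSm : MeasurableSet {v : EuclideanSpace ℝ (Fin 2) | δ⁻¹ < ‖v - m‖} := by
    have hcont : Continuous fun v : EuclideanSpace ℝ (Fin 2) => ‖v - m‖ := by continuity
    exact measurableSet_Ioi.preimage hcont.measurable
  -- translation invariance
  have htrans : ∫ v in {v : EuclideanSpace ℝ (Fin 2) | δ⁻¹ < ‖v - m‖},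
        Real.exp (-c * ‖v - m‖ ^ 2)
      = ∫ u in {u : EuclideanSpace ℝ (Fin 2) | δ⁻¹ < ‖u‖}, Real.exp (-c * ‖u‖ ^ 2) := by
    rw [← MeasureTheory.integral_indicator hS0, ← MeasureTheory.integral_indicator hSm,
      ← MeasureTheory.integral_sub_right_eq_self
        (fun u => Set.indicator {u : EuclideanSpace ℝ (Fin 2) | δ⁻¹ < ‖u‖}
          (fun u => Real.exp (-c * ‖u‖ ^ 2)) u) m]
    congr 1 with v
  -- compute the integral
  have hval : ∫ v in {v : EuclideanSpace ℝ (Fin 2) | δ⁻¹ < ‖v - m‖},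
        Real.exp (ε * ‖v‖ ^ 2) * Real.exp (a * ‖v‖ ^ 2) * Real.exp (-b * ‖v - w‖ ^ 2)
      = Real.exp K * (Real.pi / c * Real.exp (-c * (δ⁻¹) ^ 2)) := by
    rw [MeasureTheory.setIntegral_congr_fun hSm (fun v _ => hptv v),
      MeasureTheory.integral_const_mul, htrans, tail_two_dim c δ⁻¹ hc (inv_pos.mpr hδ)]
  rw [hval]
  have hexp : Real.exp (-c * (δ⁻¹) ^ 2) ≤ δ := by
    have : -c * (δ⁻¹) ^ 2 = -c / δ ^ 2 := by
      field_simp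
    rw [this]
    exact hδ'
  have hπ : (0 : ℝ) < Real.pi := Real.pi_pos
  have heq : b / Real.pi * (Real.exp K * (Real.pi / c * Real.exp (-c * δ⁻¹ ^ 2)))
      = (b / c) * Real.exp K * Real.exp (-c * δ⁻¹ ^ 2) := by
    field_simp
  rw [heq]
  calc (b / c) * Real.exp K * Real.exp (-c * δ⁻¹ ^ 2)
      ≤ (b / c) * Real.exp K * δ := by
        apply mul_le_mul_of_nonneg_left hexp
        positivity
    _ = δ * (b / c) * Real.exp K := by ring
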